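/- Any number in S_k is at distance at least 1/(2k^2) from the sum of any nonempty subset of S_k \ {x} of size at least 2. More precisely: for any R ⊆ S_k with |R| = m and m ≠ 1, the sum Σ_{r∈R} r is not in S_k, since it has the form j/k + m/(2k^2) for some natural number j, and such a number lies in S_k only when m = 1. -/

import Mathlib

/-- The sum of `m ≠ 1` elements of `S_k` has the form `j/k + m/(2k²)` and is not in `S_k`. -/
theorem stmt1 (k : ℕ) (hk : 0 < k)
    (S : Finset ℚ)
    (hS : S = (Finset.Icc 1 k).image (fun i : ℕ => (i : ℚ) / k + 1 / (2 * k ^ 2)))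
    (R : Finset ℚ) (hR : R ⊆ S)
    (m : ℕ) (hm : m = R.card) (hm1 : m ≠ 1) :
    (∃ j : ℕ, ∑ r ∈ R, r = (j : ℚ) / k + (m : ℚ) / (2 * k ^ 2)) ∧
      ∑ r ∈ R, r ∉ S := by
  have hkQ : (k : ℚ) ≠ 0 := by positivity
  set f : ℕ → ℚ := fun i : ℕ => (i : ℚ) / k + 1 / (2 * k ^ 2) with hf
  have hinj : ∀ i i' : ℕ, f i = f i' → i = i' := by
    intro i i' h
    have : (i : ℚ) = i' := by
      simp only [hf, add_left_inj, div_left_inj' hkQ] at h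
      exact_mod_cast h
    exact_mod_cast this
  -- R is the image of some T ⊆ Icc 1 k
  rw [hS] at hR
  obtain ⟨T, hT, hTR⟩ := Finset.subset_image_iff.mp hR
  have hinjOn : Set.InjOn f T := fun a _ b _ h => hinj a b h
  have hcard : T.card = m := by
    rw [hm, ← hTR, Finset.card_image_of_injOn hinjOn]
  have hsum : ∑ r ∈ R, r = ((∑ i ∈ T, i : ℕ) : ℚ) / k + (m : ℚ) / (2 * k ^ 2) := by
    rw [← hTR, Finset.sum_image (fun a ha b hb h => hinj a b h)]
    push_cast
    rw [hf]
    simp only [Finset.sum_add_distrib, Finset.sum_const, Finset.sum_div, hcard]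
    push_cast
    ring
  refine ⟨⟨∑ i ∈ T, i, hsum⟩, ?_⟩
  intro hmem
  rw [hS, Finset.mem_image] at hmem
  obtain ⟨i, hi, hieq⟩ := hmem
  set j : ℕ := ∑ i ∈ T, i with hj
  rw [hsum] at hieq
  have hik : 1 ≤ i ∧ i ≤ k := by simpa using Finset.mem_Icc.mp hi
  have hmk : m ≤ k := by
    calc m = T.card := hcard.symm
    _ ≤ (Finset.Icc 1 k).card := Finset.card_le_card hT
    _ = k := by simp
  have hq : ((2*k*i+1 : ℕ) : ℚ) = ((2*k*j+m : ℕ) : ℚ) := by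
    push_cast
    simp only [hf] at hieq
    field_simp [hf] at hieq
    exact mul_left_cancel₀ hkQ (by linear_combination (k : ℚ) * hieq)
  have key : 2*k*i + 1 = 2*k*j + m := Nat.cast_injective hq
  rcases lt_trichotomy i j with h | h | h
  · nlinarith [key, hmk, hk, h]
  · subst h
    exact hm1 (by simpa using key.symm)
  · nlinarith [key, hmk, hk, h]
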